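/- Let M and N be Banach spaces, δ > 0, and let S ⊆ M be a δ-dense subset, i.e., dist(x, S) < δ for every x ∈ M. If f : M → N is a coarse map whose restriction f|_S to S is solvent, then f is solvent. -/
import Mathlib


open Metric
open scoped ENNReal NNReal

/-- Exact compression modulus. -/
noncomputable def exactComp {M N : Type*} [PseudoMetricSpace M] [PseudoMetricSpace N]
    (f : M → N) (t : ℝ) : ℝ :=
  sInf {r : ℝ | ∃ x y : M, dist x y = t ∧ dist (f x) (f y) = r}

/-- Coarse map: the expansion modulus is finite for every t. -/
def Coarse {M N : Type*} [PseudoMetricSpace M] [PseudoMetricSpace N] (f : M → N) : Prop :=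
  ∀ t : ℝ, ∃ C : ℝ, ∀ x y : M, dist x y ≤ t → dist (f x) (f y) ≤ C

/-- Solvent map. -/
def Solvent {M N : Type*} [PseudoMetricSpace M] [PseudoMetricSpace N] (f : M → N) : Prop :=
  ∀ n : ℕ, ∃ R : ℝ, 0 < R ∧ ∀ x y : M,
    dist x y ∈ Set.Icc R (R + (n : ℝ)) → (n : ℝ) < dist (f x) (f y)

/-- Almost uncollapsed map. -/
noncomputable def AlmostUncollapsed {M N : Type*} [PseudoMetricSpace M] [PseudoMetricSpace N]
    (f : M → N) : Prop :=
  ∃ t : ℝ, 0 < t ∧ 0 < exactComp f t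

/-- If S is δ-dense in M and f : M → N is coarse with solvent restriction to S,
then f is solvent. -/
theorem solvent_of_solvent_on_dense
    {M N : Type*} [NormedAddCommGroup M] [NormedSpace ℝ M] [CompleteSpace M]
    [NormedAddCommGroup N] [NormedSpace ℝ N] [CompleteSpace N]
    (δ : ℝ) (hδ : 0 < δ) (S : Set M) (hS : ∀ x : M, ∃ s ∈ S, dist x s < δ)
    (f : M → N) (hf : Coarse f)
    (hsol : ∀ n : ℕ, ∃ R : ℝ, 0 < R ∧ ∀ x ∈ S, ∀ y ∈ S,
      dist x y ∈ Set.Icc R (R + (n : ℝ)) → (n : ℝ) < dist (f x) (f y)) :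
    Solvent f := by
  intro n
  obtain ⟨C, hC⟩ := hf δ
  set m : ℕ := n + ⌈2*C + 4*δ⌉₊ with hm
  obtain ⟨R', hR'pos, hR'⟩ := hsol m
  refine ⟨R' + 2*δ, by positivity, ?_⟩
  intro x y hxy
  obtain ⟨s, hsS, hs⟩ := hS x
  obtain ⟨t, htS, ht⟩ := hS y
  have hCx : dist (f x) (f s) ≤ C := hC x s hs.le
  have hCy : dist (f y) (f t) ≤ C := hC y t ht.le
  have hC0 : 0 ≤ C := le_trans dist_nonneg hCx
  have hceil : 2*C + 4*δ ≤ (⌈2*C + 4*δ⌉₊ : ℝ) := Nat.le_ceil _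
  have hmr : (m : ℝ) = (n : ℝ) + (⌈2*C + 4*δ⌉₊ : ℝ) := by rw [hm]; push_cast; ring
  have hsx : dist s x < δ := by rw [dist_comm]; exact hs
  have hty : dist t y < δ := by rw [dist_comm]; exact ht
  have h1 : R' ≤ dist s t := by
    have h4 := dist_triangle4 x s t y
    have := hxy.1
    linarith
  have h2 : dist s t ≤ R' + m := by
    have h4 := dist_triangle4 s x y t
    have := hxy.2
    rw [hmr]; linarith
  have hmain := hR' s hsS t htS ⟨h1, h2⟩
  have h4 : dist (f s) (f t) ≤ dist (f s) (f x) + dist (f x) (f y) + dist (f y) (f t) :=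
    dist_triangle4 _ _ _ _
  have e1 : dist (f s) (f x) = dist (f x) (f s) := dist_comm _ _
  have e2 : dist (f y) (f t) ≤ C := hCy
  rw [hmr] at hmain
  linarith
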